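/- (Positivity of torsional stiffness) With χ the solution of the torsion problem on ω, the St Venant torsional stiffness K = I₁ + I₂ - ‖∇χ‖²_{L²(ω)} is strictly positive, i.e., ‖∇χ‖²_{L²(ω)} < I₁ + I₂. -/

import Mathlib

open Set MeasureTheory

lemma seg_ftc (g : ℝ → ℝ) (c : ℝ) (x₁ x₂ : ℝ) (g' : ℝ → ℝ)
    (hd : ∀ x ∈ Set.uIcc x₁ x₂, HasDerivAt g (g' x) x)
    (hae : ∀ᵐ x, x ∈ Set.uIoc x₁ x₂ → g' x = c) :
    g x₂ - g x₁ = c * (x₂ - x₁) := by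
  have hint : IntervalIntegrable g' volume x₁ x₂ := by
    have h0 : IntervalIntegrable (fun _ : ℝ => c) volume x₁ x₂ := intervalIntegrable_const
    exact h0.congr_ae ((ae_restrict_iff' measurableSet_uIoc).2
      (by filter_upwards [hae] with x hx hx'; exact (hx hx').symm))
  have h1 := intervalIntegral.integral_eq_sub_of_hasDerivAt hd hint
  have h2 : ∫ x in x₁..x₂, g' x = ∫ _x in x₁..x₂, c :=
    intervalIntegral.integral_congr_ae hae
  rw [h2, intervalIntegral.integral_const, smul_eq_mul] at h1
  linarith [h1]

lemma pick_two (s t : ℝ) (hst : s < t) (G : Set ℝ) (hG : ∀ᵐ u : ℝ, u ∈ G) :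
    ∃ u₁ u₂, u₁ ∈ G ∧ u₂ ∈ G ∧ u₁ ∈ Icc s t ∧ u₂ ∈ Icc s t ∧ u₁ < u₂ := by
  have key : ∀ (p q : ℝ), p < q → (Ioo p q ∩ G).Nonempty := by
    intro p q hpq
    apply nonempty_of_measure_ne_zero (μ := volume)
    intro h0
    have hGc : volume Gᶜ = 0 := by exact ae_iff.1 hG
    have hsub : Ioo p q ⊆ (Ioo p q ∩ G) ∪ Gᶜ := by
      intro u hu; by_cases hu' : u ∈ G
      · exact Or.inl ⟨hu, hu'⟩
      · exact Or.inr hu'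
    have hz : volume (Ioo p q) = 0 :=
      le_antisymm (le_trans (measure_mono hsub)
        (le_trans (measure_union_le _ _) (by rw [h0, hGc]; simp))) (zero_le)
    rw [Real.volume_Ioo, ENNReal.ofReal_eq_zero] at hz
    linarith
  obtain ⟨u₁, hu₁⟩ := key s ((s + t) / 2) (by linarith)
  obtain ⟨u₂, hu₂⟩ := key ((s + t) / 2) t (by linarith)
  exact ⟨u₁, u₂, hu₁.2, hu₂.2,
    ⟨hu₁.1.1.le, by linarith [hu₁.1.2]⟩,
    ⟨by linarith [hu₂.1.1], hu₂.1.2.le⟩,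
    lt_trans hu₁.1.2 hu₂.1.1⟩

lemma no_rot (ω : Set (ℝ × ℝ)) (hopen : IsOpen ω) (hne : ω.Nonempty)
    (χ : ℝ × ℝ → ℝ) (hχdiff : DifferentiableOn ℝ χ ω)
    (hae : ∀ᵐ X ∂(volume.restrict ω),
      fderiv ℝ χ X (1, 0) = X.2 ∧ fderiv ℝ χ X (0, 1) = -X.1) : False := by
  obtain ⟨x₀, hx₀⟩ := hne
  obtain ⟨r, hr, hball⟩ := Metric.isOpen_iff.1 hopen x₀ hx₀
  have hδpos : 0 < r / 2 := by positivity
  have hQsub : ∀ x y : ℝ, x ∈ Icc (x₀.1 - r/2) (x₀.1 + r/2) →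
      y ∈ Icc (x₀.2 - r/2) (x₀.2 + r/2) → (x, y) ∈ ω := by
    intro x y hx hy
    apply hball
    rw [Metric.mem_ball, Prod.dist_eq]
    have h1 : dist x x₀.1 < r := by
      rw [Real.dist_eq, abs_lt]; exact ⟨by linarith [hx.1], by linarith [hx.2]⟩
    have h2 : dist y x₀.2 < r := by
      rw [Real.dist_eq, abs_lt]; exact ⟨by linarith [hy.1], by linarith [hy.2]⟩
    exact max_lt h1 h2
  -- a.e. statements on the full plane
  have hae' : ∀ᵐ X : ℝ × ℝ, X ∈ ω →
      fderiv ℝ χ X (1, 0) = X.2 ∧ fderiv ℝ χ X (0, 1) = -X.1 :=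
    (ae_restrict_iff' hopen.measurableSet).1 hae
  rw [Measure.volume_eq_prod] at hae'
  have haeV : ∀ᵐ x : ℝ, ∀ᵐ y : ℝ, (x, y) ∈ ω →
      fderiv ℝ χ (x, y) (1, 0) = y ∧ fderiv ℝ χ (x, y) (0, 1) = -x :=
    Measure.ae_ae_of_ae_prod hae'
  have haeH : ∀ᵐ y : ℝ, ∀ᵐ x : ℝ, (x, y) ∈ ω →
      fderiv ℝ χ (x, y) (1, 0) = y ∧ fderiv ℝ χ (x, y) (0, 1) = -x := by
    have hswap : ∀ᵐ z : ℝ × ℝ ∂((volume : Measure ℝ).prod volume),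
        (z.2, z.1) ∈ ω → fderiv ℝ χ (z.2, z.1) (1, 0) = z.1 ∧
          fderiv ℝ χ (z.2, z.1) (0, 1) = -z.2 :=
      (Measure.measurePreserving_swap (μ := (volume : Measure ℝ))
        (ν := (volume : Measure ℝ))).quasiMeasurePreserving.tendsto_ae.eventually hae'
    exact Measure.ae_ae_of_ae_prod hswap
  -- pick good lines
  obtain ⟨y₁, y₂, hy₁G, hy₂G, hy₁, hy₂, hylt⟩ :=
    pick_two (x₀.2 - r/2) (x₀.2 + r/2) (by linarith)
      {y | ∀ᵐ x : ℝ, (x, y) ∈ ω →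
        fderiv ℝ χ (x, y) (1, 0) = y ∧ fderiv ℝ χ (x, y) (0, 1) = -x} haeH
  obtain ⟨x₁, x₂, hx₁G, hx₂G, hx₁, hx₂, hxlt⟩ :=
    pick_two (x₀.1 - r/2) (x₀.1 + r/2) (by linarith)
      {x | ∀ᵐ y : ℝ, (x, y) ∈ ω →
        fderiv ℝ χ (x, y) (1, 0) = y ∧ fderiv ℝ χ (x, y) (0, 1) = -x} haeV
  -- horizontal FTC for y ∈ {y₁, y₂}
  have horiz : ∀ y : ℝ, y ∈ Icc (x₀.2 - r/2) (x₀.2 + r/2) →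
      (∀ᵐ x : ℝ, (x, y) ∈ ω →
        fderiv ℝ χ (x, y) (1, 0) = y ∧ fderiv ℝ χ (x, y) (0, 1) = -x) →
      χ (x₂, y) - χ (x₁, y) = y * (x₂ - x₁) := by
    intro y hy hyG
    apply seg_ftc (fun x => χ (x, y)) y x₁ x₂ (fun x => fderiv ℝ χ (x, y) (1, 0))
    · intro x hx
      have hxI : x ∈ Icc (x₀.1 - r/2) (x₀.1 + r/2) := by
        rcases Set.uIcc_subset_uIcc (Set.mem_uIcc.2 (Or.inl ⟨hx₁.1, hx₁.2⟩))
          (Set.mem_uIcc.2 (Or.inl ⟨hx₂.1, hx₂.2⟩)) hx with h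
        · rw [Set.uIcc_of_le (by linarith [hx₁.1, hx₂.2])] at h
          exact h
      have hmem : (x, y) ∈ ω := hQsub x y hxI hy
      have hdiff : DifferentiableAt ℝ χ (x, y) :=
        (hχdiff (x, y) hmem).differentiableAt (hopen.mem_nhds hmem)
      have hline : HasDerivAt (fun t : ℝ => (t, y)) ((1 : ℝ), (0 : ℝ)) x :=
        HasDerivAt.prodMk (hasDerivAt_id x) (hasDerivAt_const x y)
      exact hdiff.hasFDerivAt.comp_hasDerivAt x hline
    · filter_upwards [hyG] with x hx hxI
      have hxI' : x ∈ Icc (x₀.1 - r/2) (x₀.1 + r/2) := by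
        have h1 := hxI.1; have h2 := hxI.2
        have hl : min x₁ x₂ = x₁ := min_eq_left hxlt.le
        have hr' : max x₁ x₂ = x₂ := max_eq_right hxlt.le
        rw [Set.mem_uIoc] at hxI
        constructor
        · rcases hxI with h | h
          · linarith [h.1, hx₁.1]
          · linarith [h.1, hx₂.1]
        · rcases hxI with h | h
          · linarith [h.2, hx₂.2]
          · linarith [h.2, hx₁.2]
      exact (hx (hQsub x y hxI' hy)).1
  -- vertical FTC for x ∈ {x₁, x₂}
  have vert : ∀ x : ℝ, x ∈ Icc (x₀.1 - r/2) (x₀.1 + r/2) →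
      (∀ᵐ y : ℝ, (x, y) ∈ ω →
        fderiv ℝ χ (x, y) (1, 0) = y ∧ fderiv ℝ χ (x, y) (0, 1) = -x) →
      χ (x, y₂) - χ (x, y₁) = -x * (y₂ - y₁) := by
    intro x hx hxG
    apply seg_ftc (fun y => χ (x, y)) (-x) y₁ y₂ (fun y => fderiv ℝ χ (x, y) (0, 1))
    · intro y hy
      have hyI : y ∈ Icc (x₀.2 - r/2) (x₀.2 + r/2) := by
        rw [Set.uIcc_of_le hylt.le] at hy
        exact ⟨le_trans hy₁.1 hy.1, le_trans hy.2 hy₂.2⟩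
      have hmem : (x, y) ∈ ω := hQsub x y hx hyI
      have hdiff : DifferentiableAt ℝ χ (x, y) :=
        (hχdiff (x, y) hmem).differentiableAt (hopen.mem_nhds hmem)
      have hline : HasDerivAt (fun t : ℝ => (x, t)) ((0 : ℝ), (1 : ℝ)) y :=
        HasDerivAt.prodMk (hasDerivAt_const y x) (hasDerivAt_id y)
      exact hdiff.hasFDerivAt.comp_hasDerivAt y hline
    · filter_upwards [hxG] with y hy hyI
      have hyI' : y ∈ Icc (x₀.2 - r/2) (x₀.2 + r/2) := by
        rw [Set.mem_uIoc] at hyI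
        constructor
        · rcases hyI with h | h
          · linarith [h.1, hy₁.1]
          · linarith [h.1, hy₂.1]
        · rcases hyI with h | h
          · linarith [h.2, hy₂.2]
          · linarith [h.2, hy₁.2]
      exact (hy (hQsub x y hx hyI')).2
  have H1 := horiz y₁ hy₁ hy₁G
  have H2 := horiz y₂ hy₂ hy₂G
  have V1 := vert x₁ hx₁ hx₁G
  have V2 := vert x₂ hx₂ hx₂G
  nlinarith [mul_pos (sub_pos.2 hxlt) (sub_pos.2 hylt)]
theorem stmt13 (ω : Set (ℝ × ℝ)) (hopen : IsOpen ω) (hne : ω.Nonempty)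
    (hbd : Bornology.IsBounded ω)
    (hc1 : (∫ X in ω, X.1) = 0) (hc2 : (∫ X in ω, X.2) = 0)
    (χ : ℝ × ℝ → ℝ) (hχdiff : DifferentiableOn ℝ χ ω)
    (hχmean : (∫ X in ω, χ X) = 0)
    (hgradL2 : IntegrableOn
      (fun X => (fderiv ℝ χ X (1, 0)) ^ 2 + (fderiv ℝ χ X (0, 1)) ^ 2) ω)
    (hvar : ∀ ψ : ℝ × ℝ → ℝ, DifferentiableOn ℝ ψ ω →
      (∫ X in ω, (fderiv ℝ χ X (1, 0) * fderiv ℝ ψ X (1, 0)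
          + fderiv ℝ χ X (0, 1) * fderiv ℝ ψ X (0, 1))) =
        -∫ X in ω, (-X.2 * fderiv ℝ ψ X (1, 0) + X.1 * fderiv ℝ ψ X (0, 1))) :
    (∫ X in ω, ((fderiv ℝ χ X (1, 0)) ^ 2 + (fderiv ℝ χ X (0, 1)) ^ 2)) <
      (∫ X in ω, X.1 ^ 2) + ∫ X in ω, X.2 ^ 2 := by
  have hμ : volume ω < ⊤ := hbd.measure_lt_top
  haveI : IsFiniteMeasure (volume.restrict ω) :=
    ⟨by rwa [Measure.restrict_apply_univ]⟩
  have hm1 : Measurable fun X : ℝ × ℝ => fderiv ℝ χ X (1, 0) :=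
    measurable_fderiv_apply_const ℝ χ (1, 0)
  have hm2 : Measurable fun X : ℝ × ℝ => fderiv ℝ χ X (0, 1) :=
    measurable_fderiv_apply_const ℝ χ (0, 1)
  have hf₁sq : IntegrableOn (fun X : ℝ × ℝ => fderiv ℝ χ X (1, 0) ^ 2) ω := by
    apply hgradL2.mono' ((hm1.pow_const 2).aestronglyMeasurable)
    filter_upwards with X
    rw [Real.norm_eq_abs, abs_of_nonneg (by positivity)]
    nlinarith [sq_nonneg (fderiv ℝ χ X (0, 1))]
  have hf₂sq : IntegrableOn (fun X : ℝ × ℝ => fderiv ℝ χ X (0, 1) ^ 2) ω := by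
    apply hgradL2.mono' ((hm2.pow_const 2).aestronglyMeasurable)
    filter_upwards with X
    rw [Real.norm_eq_abs, abs_of_nonneg (by positivity)]
    nlinarith [sq_nonneg (fderiv ℝ χ X (1, 0))]
  obtain ⟨M, hM⟩ := hbd.subset_closedBall 0
  have hbound : ∀ X ∈ ω, |X.1| ≤ M ∧ |X.2| ≤ M := by
    intro X hX
    have h := hM hX
    rw [Metric.mem_closedBall, dist_zero_right] at h
    exact ⟨le_trans (by exact norm_fst_le X) h, le_trans (by exact norm_snd_le X) h⟩
  have hX1sq : IntegrableOn (fun X : ℝ × ℝ => X.1 ^ 2) ω := by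
    apply Integrable.mono' (integrable_const (M ^ 2))
      ((continuous_fst.pow 2).aestronglyMeasurable)
    rw [ae_restrict_iff' hopen.measurableSet]
    filter_upwards with X hX
    simp only [Pi.pow_apply]
    rw [Real.norm_eq_abs, abs_of_nonneg (by positivity)]
    nlinarith [(hbound X hX).1, abs_nonneg X.1, sq_abs X.1]
  have hX2sq : IntegrableOn (fun X : ℝ × ℝ => X.2 ^ 2) ω := by
    apply Integrable.mono' (integrable_const (M ^ 2))
      ((continuous_snd.pow 2).aestronglyMeasurable)
    rw [ae_restrict_iff' hopen.measurableSet]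
    filter_upwards with X hX
    simp only [Pi.pow_apply]
    rw [Real.norm_eq_abs, abs_of_nonneg (by positivity)]
    nlinarith [(hbound X hX).2, abs_nonneg X.2, sq_abs X.2]
  have hXsq : IntegrableOn (fun X : ℝ × ℝ => X.1 ^ 2 + X.2 ^ 2) ω := hX1sq.add hX2sq
  have hcross : IntegrableOn
      (fun X : ℝ × ℝ => -X.2 * fderiv ℝ χ X (1, 0) + X.1 * fderiv ℝ χ X (0, 1)) ω := by
    have h1 : IntegrableOn (fun X : ℝ × ℝ => -X.2 * fderiv ℝ χ X (1, 0)) ω := by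
      have hb : IntegrableOn
          (fun X : ℝ × ℝ => (X.2 ^ 2 + fderiv ℝ χ X (1, 0) ^ 2) / 2) ω :=
        (hX2sq.add hf₁sq).div_const 2
      apply hb.mono' (((continuous_snd.neg.measurable).mul hm1).aestronglyMeasurable)
      filter_upwards with X
      simp only [Pi.mul_apply, Pi.neg_apply]
      rw [Real.norm_eq_abs, abs_mul, abs_neg]
      nlinarith [sq_nonneg (|X.2| - |fderiv ℝ χ X (1, 0)|), sq_abs X.2,
        sq_abs (fderiv ℝ χ X (1, 0)), abs_nonneg X.2, abs_nonneg (fderiv ℝ χ X (1, 0))]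
    have h2 : IntegrableOn (fun X : ℝ × ℝ => X.1 * fderiv ℝ χ X (0, 1)) ω := by
      have hb : IntegrableOn
          (fun X : ℝ × ℝ => (X.1 ^ 2 + fderiv ℝ χ X (0, 1) ^ 2) / 2) ω :=
        (hX1sq.add hf₂sq).div_const 2
      apply hb.mono' (((continuous_fst.measurable).mul hm2).aestronglyMeasurable)
      filter_upwards with X
      simp only [Pi.mul_apply]
      rw [Real.norm_eq_abs, abs_mul]
      nlinarith [sq_nonneg (|X.1| - |fderiv ℝ χ X (0, 1)|), sq_abs X.1,
        sq_abs (fderiv ℝ χ X (0, 1)), abs_nonneg X.1, abs_nonneg (fderiv ℝ χ X (0, 1))]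
    exact h1.add h2
  -- variational identity with ψ = χ
  have hA := hvar χ hχdiff
  have hAeq : (∫ X in ω, (fderiv ℝ χ X (1, 0) * fderiv ℝ χ X (1, 0)
      + fderiv ℝ χ X (0, 1) * fderiv ℝ χ X (0, 1))) =
      ∫ X in ω, (fderiv ℝ χ X (1, 0) ^ 2 + fderiv ℝ χ X (0, 1) ^ 2) := by
    apply integral_congr_ae
    filter_upwards with X
    ring
  rw [hAeq] at hA
  -- hA : ∫ |∇χ|² = - ∫ cross
  have hcross_val : (∫ X in ω,
      (-X.2 * fderiv ℝ χ X (1, 0) + X.1 * fderiv ℝ χ X (0, 1))) =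
      -∫ X in ω, (fderiv ℝ χ X (1, 0) ^ 2 + fderiv ℝ χ X (0, 1) ^ 2) := by
    linarith [hA]
  -- expansion of K
  have hKint : IntegrableOn
      (fun X : ℝ × ℝ => (fderiv ℝ χ X (1, 0) - X.2) ^ 2
        + (fderiv ℝ χ X (0, 1) + X.1) ^ 2) ω := by
    have heq : (fun X : ℝ × ℝ => (fderiv ℝ χ X (1, 0) - X.2) ^ 2
        + (fderiv ℝ χ X (0, 1) + X.1) ^ 2) =
        (fun X : ℝ × ℝ => ((fderiv ℝ χ X (1, 0) ^ 2 + fderiv ℝ χ X (0, 1) ^ 2)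
          + (X.1 ^ 2 + X.2 ^ 2))
          + (2 : ℝ) * (-X.2 * fderiv ℝ χ X (1, 0) + X.1 * fderiv ℝ χ X (0, 1))) :=
      funext fun X => by ring
    rw [heq]
    exact (hgradL2.add hXsq).add (hcross.const_mul 2)
  have hKexp : (∫ X in ω, ((fderiv ℝ χ X (1, 0) - X.2) ^ 2
      + (fderiv ℝ χ X (0, 1) + X.1) ^ 2)) =
      ((∫ X in ω, X.1 ^ 2) + ∫ X in ω, X.2 ^ 2) -
        ∫ X in ω, (fderiv ℝ χ X (1, 0) ^ 2 + fderiv ℝ χ X (0, 1) ^ 2) := by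
    have step1 : (∫ X in ω, ((fderiv ℝ χ X (1, 0) - X.2) ^ 2
        + (fderiv ℝ χ X (0, 1) + X.1) ^ 2)) =
        ∫ X in ω, (((fderiv ℝ χ X (1, 0) ^ 2 + fderiv ℝ χ X (0, 1) ^ 2)
          + (X.1 ^ 2 + X.2 ^ 2))
          + (2 : ℝ) * (-X.2 * fderiv ℝ χ X (1, 0) + X.1 * fderiv ℝ χ X (0, 1))) := by
      apply integral_congr_ae
      filter_upwards with X
      ring
    have h12 : IntegrableOn (fun X : ℝ × ℝ =>
        (fderiv ℝ χ X (1, 0) ^ 2 + fderiv ℝ χ X (0, 1) ^ 2) + (X.1 ^ 2 + X.2 ^ 2)) ω :=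
      hgradL2.add hXsq
    have h3 : IntegrableOn (fun X : ℝ × ℝ =>
        (2 : ℝ) * (-X.2 * fderiv ℝ χ X (1, 0) + X.1 * fderiv ℝ χ X (0, 1))) ω :=
      hcross.const_mul 2
    rw [step1, integral_add h12 h3, integral_add hgradL2 hXsq,
      integral_add hX1sq hX2sq, integral_const_mul, hcross_val]
    ring
  have hKnonneg : 0 ≤ ∫ X in ω, ((fderiv ℝ χ X (1, 0) - X.2) ^ 2
      + (fderiv ℝ χ X (0, 1) + X.1) ^ 2) :=
    integral_nonneg (fun X => by positivity)
  by_contra hcon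
  push_neg at hcon
  have hK0 : (∫ X in ω, ((fderiv ℝ χ X (1, 0) - X.2) ^ 2
      + (fderiv ℝ χ X (0, 1) + X.1) ^ 2)) = 0 := by
    rw [hKexp]; linarith
  have hzero : (fun X : ℝ × ℝ => (fderiv ℝ χ X (1, 0) - X.2) ^ 2
      + (fderiv ℝ χ X (0, 1) + X.1) ^ 2) =ᵐ[volume.restrict ω] 0 :=
    (integral_eq_zero_iff_of_nonneg (fun X => by positivity) hKint).1 hK0
  apply no_rot ω hopen hne χ hχdiff
  filter_upwards [hzero] with X hX
  simp only [Pi.zero_apply] at hX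
  constructor
  · nlinarith [sq_nonneg (fderiv ℝ χ X (1, 0) - X.2), sq_nonneg (fderiv ℝ χ X (0, 1) + X.1)]
  · nlinarith [sq_nonneg (fderiv ℝ χ X (1, 0) - X.2), sq_nonneg (fderiv ℝ χ X (0, 1) + X.1)]
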